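/- arXiv:2211.13259 — 2 statements merged into one kernel-verified Lean document; each statement's English description precedes it below -/
import Mathlib

section
/- Let T be a type, let (A i)_{i ∈ ℕ} be a decreasing (with respect to set inclusion) sequence of subsets of T, and define a reward function r : T → ℝ by r t = 0 if t ∈ A i for all i, r t = -2^(-i) if i is the maximum index with t ∈ A i (i.e. t ∈ A i and t ∉ A (i+1)), and r t = -1 if t ∉ A 0. Then for every sequence e : ℕ → T, the set {n | e n ∈ A i} is infinite for every i ∈ ℕ if and only if limsup_{n} r (e n) ≥ 0. -/
open Filter

theorem nestedBuchi_iff_limsup {T : Type*} (A : ℕ → Set T)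
    (hA : ∀ i, A (i + 1) ⊆ A i) (r : T → ℝ)
    (hr0 : ∀ t, (∀ i, t ∈ A i) → r t = 0)
    (hri : ∀ t i, t ∈ A i → t ∉ A (i + 1) → r t = -(2:ℝ) ^ (-(i:ℤ)))
    (hrneg : ∀ t, t ∉ A 0 → r t = -1)
    (e : ℕ → T) :
    (∀ i : ℕ, {n : ℕ | e n ∈ A i}.Infinite) ↔
      Filter.limsup (fun n => r (e n)) Filter.atTop ≥ 0 := by
  classical
  -- A is antitone
  have hanti : ∀ {m j : ℕ}, m ≤ j → A j ⊆ A m := by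
    intro m j h
    induction h with
    | refl => exact subset_rfl
    | step h ih => exact fun x hx => ih (hA _ hx)
  -- lower bound when t ∈ A i
  have hlow : ∀ t i, t ∈ A i → -(2:ℝ) ^ (-(i:ℤ)) ≤ r t := by
    intro t i ht
    by_cases hall : ∀ j, t ∈ A j
    · rw [hr0 t hall]
      have : (0:ℝ) < (2:ℝ) ^ (-(i:ℤ)) := by positivity
      linarith
    · push_neg at hall
      have hex : ∃ j, t ∉ A j := hall
      set k := Nat.find hex with hk
      have hknot : t ∉ A k := Nat.find_spec hex
      have hki : i < k := by
        by_contra h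
        push_neg at h
        exact hknot (hanti h ht)
      have hk1 : k - 1 + 1 = k := by omega
      have hkin : t ∈ A (k - 1) := by
        by_contra h
        have h2 : k ≤ k - 1 := Nat.find_le h
        omega
      have := hri t (k - 1) hkin (by rwa [hk1])
      rw [this]
      have hle : ((i:ℤ)) ≤ ((k - 1 : ℕ) : ℤ) := by
        have : i ≤ k - 1 := by omega
        exact_mod_cast this
      have : (2:ℝ) ^ (-((k - 1 : ℕ) : ℤ)) ≤ (2:ℝ) ^ (-(i:ℤ)) := by
        apply zpow_le_zpow_right₀ (by norm_num : (1:ℝ) ≤ 2)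
        omega
      linarith
  -- upper bound when t ∉ A i
  have hupp : ∀ t i, t ∉ A i → r t ≤ -(2:ℝ) ^ (-(i:ℤ)) := by
    intro t i ht
    by_cases h0 : t ∈ A 0
    · have hex : ∃ j, t ∉ A j := ⟨i, ht⟩
      set k := Nat.find hex with hk
      have hknot : t ∉ A k := Nat.find_spec hex
      have hki : k ≤ i := Nat.find_le ht
      have hkpos : 0 < k := by
        rcases Nat.eq_zero_or_pos k with h | h
        · exact absurd h0 (h ▸ hknot)
        · exact h
      have hk1 : k - 1 + 1 = k := Nat.succ_pred_eq_of_pos hkpos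
      have hkin : t ∈ A (k - 1) := by
        by_contra h
        have h2 : k ≤ k - 1 := Nat.find_le h
        omega
      rw [hri t (k - 1) hkin (by rwa [hk1])]
      have : (2:ℝ) ^ (-(i:ℤ)) ≤ (2:ℝ) ^ (-((k - 1 : ℕ) : ℤ)) := by
        apply zpow_le_zpow_right₀ (by norm_num : (1:ℝ) ≤ 2)
        omega
      linarith
    · rw [hrneg t h0]
      have h1 : (2:ℝ) ^ (-(i:ℤ)) ≤ 1 := by
        apply zpow_le_one_of_nonpos₀ (by norm_num : (1:ℝ) ≤ 2)
        omega
      linarith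
  -- global bounds
  have hub : ∀ t, r t ≤ 0 := by
    intro t
    by_cases hall : ∀ j, t ∈ A j
    · rw [hr0 t hall]
    · push_neg at hall
      obtain ⟨j, hj⟩ := hall
      have := hupp t j hj
      have : (0:ℝ) < (2:ℝ) ^ (-(j:ℤ)) := by positivity
      linarith [hupp t j hj]
  have hlb : ∀ t, -1 ≤ r t := by
    intro t
    by_cases h0 : t ∈ A 0
    · have := hlow t 0 h0
      norm_num at this
      linarith
    · rw [hrneg t h0]
  have hbddAbove : IsBoundedUnder (· ≤ ·) atTop (fun n => r (e n)) :=
    isBoundedUnder_of ⟨0, fun n => hub (e n)⟩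
  have hbddBelow : IsBoundedUnder (· ≥ ·) atTop (fun n => r (e n)) :=
    isBoundedUnder_of ⟨-1, fun n => hlb (e n)⟩
  constructor
  · intro h
    have hLge : ∀ i : ℕ, -(2:ℝ) ^ (-(i:ℤ)) ≤ limsup (fun n => r (e n)) atTop := by
      intro i
      apply le_limsup_of_frequently_le _ hbddAbove
      have : ∃ᶠ n in atTop, e n ∈ A i := Nat.frequently_atTop_iff_infinite.2 (h i)
      exact this.mono fun n hn => hlow (e n) i hn
    by_contra hneg
    push_neg at hneg
    set L := limsup (fun n => r (e n)) atTop
    obtain ⟨m, hm⟩ := exists_pow_lt_of_lt_one (by linarith : (0:ℝ) < -L)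
      (by norm_num : (1/2 : ℝ) < 1)
    have heq : ((1/2:ℝ)) ^ m = (2:ℝ) ^ (-(m:ℤ)) := by
      rw [zpow_neg, zpow_natCast, one_div, inv_pow]
    rw [heq] at hm
    have := hLge m
    linarith
  · intro h
    by_contra hcon
    push_neg at hcon
    obtain ⟨i, hi⟩ := hcon
    have hfin : {n : ℕ | e n ∈ A i}.Finite := hi
    have hev : ∀ᶠ n in atTop, e n ∉ A i := by
      rw [← Nat.cofinite_eq_atTop]
      exact hfin.eventually_cofinite_notMem
    have hle : limsup (fun n => r (e n)) atTop ≤ -(2:ℝ) ^ (-(i:ℤ)) := by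
      have hcob : IsCoboundedUnder (· ≤ ·) atTop (fun n => r (e n)) :=
        hbddBelow.isCoboundedUnder_le
      exact limsup_le_of_le hcob (hev.mono fun n hn => hupp (e n) i hn)
    have : (0:ℝ) < (2:ℝ) ^ (-(i:ℤ)) := by positivity
    linarith
end

section
/- Let T be a countable type, (A i)_{i ∈ ℕ} a decreasing sequence of subsets of T, and (F i)_{i ∈ ℕ} a sequence of finite subsets of T with F i ⊆ A i for every i. Let x : ℕ → T be a sequence such that (1) the set {n | x n ∈ ⋃_i F i} is infinite, and (2) for every t ∈ T the set {n | x n = t} is finite. Then for every i ∈ ℕ the set {n | x n ∈ A i} is infinite. -/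
open Filter

theorem infinite_visits_of_good {T : Type*} [Countable T]
    (A : ℕ → Set T) (hA : ∀ i, A (i + 1) ⊆ A i)
    (F : ℕ → Set T) (hFfin : ∀ i, (F i).Finite) (hFA : ∀ i, F i ⊆ A i)
    (x : ℕ → T)
    (h1 : {n : ℕ | x n ∈ ⋃ i : ℕ, F i}.Infinite)
    (h2 : ∀ t : T, {n : ℕ | x n = t}.Finite) :
    ∀ i : ℕ, {n : ℕ | x n ∈ A i}.Infinite := by
  have hanti : Antitone A := antitone_nat_of_succ_le hA
  intro i
  -- the set of times visiting the finite set ⋃ j < i, F j is finite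
  have hSfin : ({n : ℕ | ∃ j < i, x n ∈ F j}).Finite := by
    have : {n : ℕ | ∃ j < i, x n ∈ F j} ⊆
        ⋃ t ∈ (⋃ j ∈ Finset.range i, F j), {n : ℕ | x n = t} := by
      rintro n ⟨j, hj, hx⟩
      exact Set.mem_biUnion (Set.mem_biUnion (Finset.mem_range.mpr hj) hx) rfl
    refine Set.Finite.subset ?_ this
    refine Set.Finite.biUnion ?_ (fun t _ => h2 t)
    exact (Set.Finite.biUnion (Set.finite_mem_finset (Finset.range i)) (fun j _ => hFfin j))
  have hsub : {n : ℕ | x n ∈ ⋃ i : ℕ, F i} \ {n : ℕ | ∃ j < i, x n ∈ F j}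
      ⊆ {n : ℕ | x n ∈ A i} := by
    rintro n ⟨hn, hn'⟩
    obtain ⟨_, ⟨j, rfl⟩, hxj⟩ := hn
    have hij : i ≤ j := by
      by_contra h
      exact hn' ⟨j, Nat.lt_of_not_le h, hxj⟩
    exact hanti hij (hFA j hxj)
  exact ((h1.diff hSfin).mono hsub)
end
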